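/- Let L/K be a finite separable totally ramified extension of local fields of degree n, let v: L* → ℤ/nℤ be the map x ↦ (v_L(x) mod n), and for a sub-K-vector space V of L set s(V) = {v(x) : x ∈ V, x ≠ 0} ⊆ ℤ/nℤ. Let d̄ = (−d_{L/K} − 1 mod nℤ) ∈ ℤ/nℤ, and let V^⊥ = {y ∈ L : Tr_{L/K}(xy) = 0 for all x ∈ V} be the orthogonal space of V with respect to the trace form. Then s(V^⊥) is the complement in ℤ/nℤ of the set d̄ − s(V) = {d̄ − a : a ∈ s(V)}. -/

import Mathlib

/-- A local field structure on a field `K`: a normalized (surjective) discrete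
valuation `v : K* ↠ ℤ`, extended by a junk value at `0`, with respect to which
`K` is complete. -/
structure LocalFieldStruct (K : Type) [Field K] where
  /-- the valuation; its value at `0` is irrelevant -/
  v : K → ℤ
  v_mul : ∀ x y : K, x ≠ 0 → y ≠ 0 → v (x * y) = v x + v y
  v_add : ∀ x y : K, x ≠ 0 → y ≠ 0 → x + y ≠ 0 → min (v x) (v y) ≤ v (x + y)
  v_surj : ∀ n : ℤ, ∃ x : K, x ≠ 0 ∧ v x = n
  complete : ∀ a : ℕ → K,
      (∀ N : ℤ, ∃ M : ℕ, ∀ m : ℕ, M ≤ m → ∀ n : ℕ, M ≤ n →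
        a m = a n ∨ N ≤ v (a m - a n)) →
      ∃ x : K, ∀ N : ℤ, ∃ M : ℕ, ∀ n : ℕ, M ≤ n → a n = x ∨ N ≤ v (a n - x)

namespace LocalFieldStruct

variable {K L : Type} [Field K] [Field L]

/-- `x` lies in the valuation ring `O_K`. -/
def Integral (w : LocalFieldStruct K) (x : K) : Prop :=
  x = 0 ∨ 0 ≤ w.v x

/-- The residue characteristic of `K` is the prime `p`, i.e. `p` maps to `0`
in the residue field of the valuation ring. -/
def ResidueCharP (w : LocalFieldStruct K) (p : ℕ) : Prop :=
  p.Prime ∧ ((p : K) = 0 ∨ 0 < w.v (p : K))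

/-- `K` has mixed characteristic `(0, p)`: `K` has characteristic `0` and its
residue field has characteristic `p > 0`. -/
def MixedChar (w : LocalFieldStruct K) (p : ℕ) : Prop :=
  CharZero K ∧ p.Prime ∧ 0 < w.v (p : K)

/-- `e` is the ramification index `e_{L/K}`: the valuation of `L` restricted to
`K` is `e` times the valuation of `K`. -/
def IsRamificationIndex (wK : LocalFieldStruct K) (wL : LocalFieldStruct L)
    [Algebra K L] (e : ℕ) : Prop :=
  0 < e ∧ ∀ x : K, x ≠ 0 → wL.v (algebraMap K L x) = (e : ℤ) * wK.v x

/-- `d` is the valuation `d_{L/K}` of the different of `L/K`, characterized by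
`Tr_{L/K}(𝔭_L^i) ⊆ O_K ↔ i ≥ -d` for all `i : ℤ`. -/
def IsDifferentVal (wK : LocalFieldStruct K) (wL : LocalFieldStruct L)
    [Algebra K L] (d : ℤ) : Prop :=
  ∀ i : ℤ,
    (∀ x : L, (x ≠ 0 → i ≤ wL.v x) → wK.Integral (Algebra.trace K L x)) ↔ -d ≤ i

end LocalFieldStruct

namespace LocalFieldStruct


variable {K : Type} [Field K] (w : LocalFieldStruct K)

theorem v_one : w.v 1 = 0 := by
  have := w.v_mul 1 1 one_ne_zero one_ne_zero
  simpa using this.symm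

theorem v_neg {x : K} (hx : x ≠ 0) : w.v (-x) = w.v x := by
  have h1 : w.v (-1 : K) = 0 := by
    have := w.v_mul (-1) (-1) (by norm_num) (by norm_num)
    simp only [neg_mul, one_mul, neg_neg, v_one] at this
    omega
  have := w.v_mul (-1) x (by norm_num) hx
  simpa [h1] using this

theorem v_inv {x : K} (hx : x ≠ 0) : w.v x⁻¹ = - w.v x := by
  have := w.v_mul x x⁻¹ hx (inv_ne_zero hx)
  rw [mul_inv_cancel₀ hx, v_one] at this
  omega

theorem integral_add {a b : K} (ha : w.Integral a) (hb : w.Integral b) :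
    w.Integral (a + b) := by
  by_cases ha0 : a = 0
  · simpa [ha0] using hb
  by_cases hb0 : b = 0
  · simpa [hb0] using ha
  by_cases hab : a + b = 0
  · exact Or.inl hab
  right
  have hva : 0 ≤ w.v a := ha.resolve_left ha0
  have hvb : 0 ≤ w.v b := hb.resolve_left hb0
  have := w.v_add a b ha0 hb0 hab
  simp only [le_min_iff, min_le_iff] at this ⊢
  omega

theorem integral_mul {a b : K} (ha : w.Integral a) (hb : w.Integral b) :
    w.Integral (a * b) := by
  by_cases ha0 : a = 0
  · simp [ha0, Integral]
  by_cases hb0 : b = 0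
  · simp [hb0, Integral]
  right
  rw [w.v_mul a b ha0 hb0]
  have hva : 0 ≤ w.v a := ha.resolve_left ha0
  have hvb : 0 ≤ w.v b := hb.resolve_left hb0
  omega

theorem v_pow {x : K} (hx : x ≠ 0) (m : ℕ) : w.v (x ^ m) = m * w.v x := by
  induction m with
  | zero => simpa using w.v_one
  | succ k ih =>
    rw [pow_succ, w.v_mul _ _ (pow_ne_zero k hx) hx, ih]
    push_cast; ring

/-- strict ultrametric -/
theorem v_add_eq {x y : K} (hx : x ≠ 0) (hy : y ≠ 0) (h : w.v x < w.v y) :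
    x + y ≠ 0 ∧ w.v (x + y) = w.v x := by
  have hxy : x + y ≠ 0 := by
    intro h0
    rw [eq_neg_of_add_eq_zero_left h0, v_neg w hy] at h; omega
  refine ⟨hxy, ?_⟩
  have h1 := w.v_add x y hx hy hxy
  have h2 := w.v_add (x + y) (-y) hxy (neg_ne_zero.mpr hy)
  rw [add_neg_cancel_right] at h2
  rw [v_neg w hy] at h2
  have h2' := h2 hx
  simp only [min_le_iff] at h2'
  omega




variable {K : Type} [Field K] (w : LocalFieldStruct K)

theorem v_sum_ge {ι : Type} (N : ℤ) (s : Finset ι) (z : ι → K)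
    (h : ∀ i ∈ s, z i = 0 ∨ N ≤ w.v (z i)) :
    (∑ i ∈ s, z i) = 0 ∨ N ≤ w.v (∑ i ∈ s, z i) := by
  induction s using Finset.cons_induction with
  | empty => simp
  | cons a s ha ih =>
    rw [Finset.sum_cons]
    have hih := ih (fun i hi => h i (Finset.mem_cons_of_mem hi))
    have ha' := h a (Finset.mem_cons_self a s)
    rcases ha' with h0 | hva
    · simpa [h0] using hih
    rcases hih with h0 | hvs
    · simp [h0, hva]
    by_cases hza : z a = 0
    · simpa [hza] using Or.inr hvs
    by_cases hzs : (∑ i ∈ s, z i) = 0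
    · simp [hzs, hva]
    by_cases hsum : z a + ∑ i ∈ s, z i = 0
    · exact Or.inl hsum
    · right
      have := w.v_add _ _ hza hzs hsum
      simp only [min_le_iff] at this
      omega

theorem v_sum_distinct {ι : Type} (s : Finset ι) (z : ι → K) (hz : ∀ i ∈ s, z i ≠ 0)
    (hd : ∀ i ∈ s, ∀ j ∈ s, i ≠ j → w.v (z i) ≠ w.v (z j)) (hs : s.Nonempty) :
    (∑ i ∈ s, z i) ≠ 0 ∧
      ∃ i ∈ s, w.v (∑ j ∈ s, z j) = w.v (z i) ∧ ∀ j ∈ s, w.v (z i) ≤ w.v (z j) := by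
  induction s using Finset.cons_induction with
  | empty => simp at hs
  | cons a s ha ih =>
    rcases s.eq_empty_or_nonempty with rfl | hs'
    · refine ⟨by simpa using hz a (by simp), a, by simp⟩
    have ihz : ∀ i ∈ s, z i ≠ 0 := fun i hi => hz i (Finset.mem_cons_of_mem hi)
    have ihd : ∀ i ∈ s, ∀ j ∈ s, i ≠ j → w.v (z i) ≠ w.v (z j) := fun i hi j hj =>
      hd i (Finset.mem_cons_of_mem hi) j (Finset.mem_cons_of_mem hj)
    obtain ⟨hne, i, hi, hvi, hmin⟩ := ih ihz ihd hs'
    have hza : z a ≠ 0 := hz a (Finset.mem_cons_self a s)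
    have hai : a ≠ i := fun h => ha (h ▸ hi)
    have hvai : w.v (z a) ≠ w.v (z i) :=
      hd a (Finset.mem_cons_self a s) i (Finset.mem_cons_of_mem hi) hai
    rw [Finset.sum_cons]
    rcases lt_or_gt_of_ne (hvi ▸ hvai) with hlt | hgt
    · obtain ⟨h1, h2⟩ := w.v_add_eq hza hne hlt
      refine ⟨h1, a, Finset.mem_cons_self a s, h2, ?_⟩
      intro j hj
      rcases Finset.mem_cons.mp hj with rfl | hj'
      · exact le_refl _
      · have := hmin j hj'; omega
    · obtain ⟨h1, h2⟩ := w.v_add_eq hne hza hgt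
      rw [add_comm] at h1 h2
      refine ⟨h1, i, Finset.mem_cons_of_mem hi, by rw [h2, hvi], ?_⟩
      intro j hj
      rcases Finset.mem_cons.mp hj with rfl | hj'
      · omega
      · exact hmin j hj'




open LocalFieldStruct
variable {K L : Type} [Field K] [Field L] [Algebra K L]
  (wK : LocalFieldStruct K) (wL : LocalFieldStruct L) {n : ℕ}
  (htot : IsRamificationIndex wK wL n)
include htot

theorem v_smul {c : K} {x : L} (hc : c ≠ 0) (hx : x ≠ 0) :
    wL.v (c • x) = (n : ℤ) * wK.v c + wL.v x := by
  rw [Algebra.smul_def, wL.v_mul _ _ ((map_ne_zero _).mpr hc) hx, htot.2 c hc]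

/-- key combination lemma -/
theorem combo {ι : Type} (s : Finset ι) (x : ι → L) (hx : ∀ i ∈ s, x i ≠ 0)
    (hd : ∀ i ∈ s, ∀ j ∈ s, i ≠ j → ¬ (wL.v (x i) ≡ wL.v (x j) [ZMOD (n : ℤ)]))
    (c : ι → K) (hex : ∃ i ∈ s, c i ≠ 0) :
    (∑ i ∈ s, c i • x i) ≠ 0 ∧
      ∀ i ∈ s, c i ≠ 0 → wL.v (∑ j ∈ s, c j • x j) ≤ (n : ℤ) * wK.v (c i) + wL.v (x i) := by
  classical
  set t := s.filter (fun i => c i ≠ 0) with ht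
  have hsum : (∑ i ∈ s, c i • x i) = ∑ i ∈ t, c i • x i := by
    rw [ht]
    rw [Finset.sum_filter]
    apply Finset.sum_congr rfl
    intro i _
    by_cases h : c i = 0 <;> simp [h]
  have htz : ∀ i ∈ t, c i • x i ≠ 0 := by
    intro i hi
    rw [ht, Finset.mem_filter] at hi
    exact smul_ne_zero hi.2 (hx i hi.1)
  have htd : ∀ i ∈ t, ∀ j ∈ t, i ≠ j → wL.v (c i • x i) ≠ wL.v (c j • x j) := by
    intro i hi j hj hij
    rw [ht, Finset.mem_filter] at hi hj
    rw [v_smul wK wL htot hi.2 (hx i hi.1), v_smul wK wL htot hj.2 (hx j hj.1)]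
    intro heq
    apply hd i hi.1 j hj.1 hij
    rw [Int.modEq_iff_dvd]
    exact ⟨wK.v (c i) - wK.v (c j), by linarith⟩
  have htne : t.Nonempty := by
    obtain ⟨i, hi, hci⟩ := hex
    exact ⟨i, by rw [ht, Finset.mem_filter]; exact ⟨hi, hci⟩⟩
  obtain ⟨hne, i0, hi0, hv0, hmin⟩ := wL.v_sum_distinct t _ htz htd htne
  rw [hsum]
  refine ⟨hne, ?_⟩
  intro i hi hci
  have hit : i ∈ t := by rw [ht, Finset.mem_filter]; exact ⟨hi, hci⟩
  have := hmin i hit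
  rw [hv0, ← v_smul wK wL htot hci (hx i hi)]
  omega

theorem li_of_distinct {ι : Type} [Fintype ι] (x : ι → L) (hx : ∀ i, x i ≠ 0)
    (hd : ∀ i j : ι, i ≠ j → ¬ (wL.v (x i) ≡ wL.v (x j) [ZMOD (n : ℤ)])) :
    LinearIndependent K x := by
  classical
  rw [Fintype.linearIndependent_iff]
  intro g hg i
  by_contra hgi
  have := (combo wK wL htot Finset.univ x (fun i _ => hx i)
    (fun i _ j _ hij => hd i j hij) g ⟨i, Finset.mem_univ i, hgi⟩).1
  exact this hg



theorem approx_unit [FiniteDimensional K L] (hn : n = Module.finrank K L)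
    {u : L} (hu : u ≠ 0) (hvu : wL.v u = 0) :
    ∃ c : K, u - algebraMap K L c = 0 ∨
      (u - algebraMap K L c ≠ 0 ∧ 0 < wL.v (u - algebraMap K L c)) := by
  classical
  by_contra hcon
  push_neg at hcon
  have hnpos : 0 < n := htot.1
  -- every element u - c is nonzero with valuation divisible by n
  have hcl : ∀ c : K, u - algebraMap K L c ≠ 0 ∧ (n : ℤ) ∣ wL.v (u - algebraMap K L c) := by
    intro c
    have h1 := (hcon c).1
    have h2 : wL.v (u - algebraMap K L c) ≤ 0 := by
      have := (hcon c).2 h1; omega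
    refine ⟨h1, ?_⟩
    by_cases hc : c = 0
    · simp only [hc, map_zero, sub_zero] at h2 ⊢
      rw [hvu]
      exact dvd_zero _
    have hac : algebraMap K L c ≠ 0 := (map_ne_zero _).mpr hc
    have hvac : wL.v (algebraMap K L c) = n * wK.v c := htot.2 c hc
    rcases lt_trichotomy (wK.v c) 0 with hvc | hvc | hvc
    · -- v(-c) < v(u)
      have hneg : wL.v (-(algebraMap K L c)) = n * wK.v c := by
        rw [wL.v_neg hac, hvac]
      have hlt : wL.v (-(algebraMap K L c)) < wL.v u := by
        rw [hneg, hvu]; nlinarith [hnpos]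
      obtain ⟨_, h4⟩ := wL.v_add_eq (neg_ne_zero.mpr hac) hu hlt
      rw [add_comm, ← sub_eq_add_neg] at h4
      rw [h4, hneg]
      exact ⟨wK.v c, rfl⟩
    · -- v c = 0 : v(u - c) = 0
      have h3 := wL.v_add u (-(algebraMap K L c)) hu (neg_ne_zero.mpr hac)
        (by rwa [← sub_eq_add_neg])
      rw [← sub_eq_add_neg, wL.v_neg hac, hvac, hvc, mul_zero, hvu] at h3
      simp only [min_self] at h3
      have : wL.v (u - algebraMap K L c) = 0 := le_antisymm h2 h3
      simp [this]
    · -- v c > 0 : v(u - c) = v u = 0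
      have hlt : wL.v u < wL.v (-(algebraMap K L c)) := by
        rw [wL.v_neg hac, hvac, hvu]; nlinarith [hnpos]
      obtain ⟨_, h4⟩ := wL.v_add_eq hu (neg_ne_zero.mpr hac) hlt
      rw [← sub_eq_add_neg] at h4
      rw [h4, hvu]
      exact ⟨0, by ring⟩
  -- blocks
  obtain ⟨π, hπ0, hπ1⟩ := wL.v_surj 1
  set y : Fin n × Fin 2 → L := fun p => π ^ (p.1 : ℕ) * u ^ (p.2 : ℕ) with hy
  have hblock : ∀ (c0 c1 : K), (c0 ≠ 0 ∨ c1 ≠ 0) →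
      (algebraMap K L c0 + algebraMap K L c1 * u ≠ 0 ∧
        wL.v (algebraMap K L c0 + algebraMap K L c1 * u) ≡ 0 [ZMOD (n : ℤ)]) := by
    intro c0 c1 hc
    by_cases hc1 : c1 = 0
    · have hc0 : c0 ≠ 0 := by tauto
      simp only [hc1, map_zero, zero_mul, add_zero]
      refine ⟨(map_ne_zero _).mpr hc0, ?_⟩
      rw [htot.2 c0 hc0, Int.modEq_iff_dvd]
      exact ⟨-wK.v c0, by ring⟩
    · have hac1 : algebraMap K L c1 ≠ 0 := (map_ne_zero _).mpr hc1
      have key : algebraMap K L c0 + algebraMap K L c1 * u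
          = algebraMap K L c1 * (u - algebraMap K L (-(c0 / c1))) := by
        rw [map_neg, map_div₀]
        field_simp
        ring
      obtain ⟨hne, k, hk⟩ := hcl (-(c0 / c1))
      rw [key]
      refine ⟨mul_ne_zero hac1 hne, ?_⟩
      rw [wL.v_mul _ _ hac1 hne, htot.2 c1 hc1, hk, Int.modEq_iff_dvd]
      exact ⟨-(wK.v c1 + k), by ring⟩
  have hli : LinearIndependent K y := by
    rw [Fintype.linearIndependent_iff]
    intro g hg p
    by_contra hgp
    set z : Fin n → L := fun i =>
      π ^ (i : ℕ) * (algebraMap K L (g (i, 0)) + algebraMap K L (g (i, 1)) * u) with hz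
    have hsz : ∑ i : Fin n, z i = 0 := by
      rw [← hg, Fintype.sum_prod_type]
      apply Finset.sum_congr rfl
      intro i _
      rw [Fin.sum_univ_two, hz]
      simp only [Algebra.smul_def, hy, Fin.isValue, Fin.val_zero, Fin.val_one, pow_zero,
        pow_one, mul_one]
      ring
    have hzprop : ∀ i : Fin n, z i ≠ 0 →
        wL.v (z i) ≡ (i : ℤ) [ZMOD (n : ℤ)] := by
      intro i hzi
      have hbne : algebraMap K L (g (i, 0)) + algebraMap K L (g (i, 1)) * u ≠ 0 := by
        intro h0
        apply hzi
        rw [hz]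
        simp only [h0, mul_zero]
      have hb : (g (i, 0) ≠ 0 ∨ g (i, 1) ≠ 0) := by
        by_contra hb
        push_neg at hb
        apply hbne
        simp [hb.1, hb.2]
      obtain ⟨_, hbmod⟩ := hblock _ _ hb
      rw [hz]
      rw [wL.v_mul _ _ (pow_ne_zero _ hπ0) hbne, wL.v_pow hπ0, hπ1, mul_one]
      calc ((i : ℤ) + wL.v (algebraMap K L (g (i, 0)) + algebraMap K L (g (i, 1)) * u))
          ≡ (i : ℤ) + 0 [ZMOD (n : ℤ)] := Int.ModEq.add_left _ hbmod
        _ = (i : ℤ) := by ring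
    -- nonzero z's
    set t : Finset (Fin n) := Finset.univ.filter (fun i => z i ≠ 0) with htfin
    have hzp : z p.1 ≠ 0 := by
      intro h0
      have hb : (g (p.1, 0) ≠ 0 ∨ g (p.1, 1) ≠ 0) := by
        rcases Fin.exists_fin_two.mp ⟨p.2, rfl⟩ with h2 | h2
        · left; rw [← h2]; exact hgp
        · right; rw [← h2]; exact hgp
      have hbl := hblock (g (p.1, 0)) (g (p.1, 1)) hb
      apply hbl.1
      rw [hz] at h0
      rcases mul_eq_zero.mp h0 with h' | h'
      · exact absurd h' (pow_ne_zero _ hπ0)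
      · exact h'
    have htne : t.Nonempty := ⟨p.1, by rw [htfin]; simp [hzp]⟩
    have hteq : ∑ i ∈ t, z i = ∑ i : Fin n, z i := by
      rw [htfin]
      exact Finset.sum_filter_ne_zero _
    have hdist : ∀ i ∈ t, ∀ j ∈ t, i ≠ j → wL.v (z i) ≠ wL.v (z j) := by
      intro i hi j hj hij
      rw [htfin, Finset.mem_filter] at hi hj
      intro heq
      have h1 := hzprop i hi.2
      have h2 := hzprop j hj.2
      rw [heq] at h1
      have h3 : (i : ℤ) ≡ (j : ℤ) [ZMOD (n : ℤ)] := h1.symm.trans h2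
      rw [Int.ModEq] at h3
      rw [Int.emod_eq_of_lt (by positivity) (by exact_mod_cast i.2),
        Int.emod_eq_of_lt (by positivity) (by exact_mod_cast j.2)] at h3
      exact hij (Fin.ext (by exact_mod_cast h3))
    have hne := (wL.v_sum_distinct t z (fun i hi => (Finset.mem_filter.mp hi).2) hdist htne).1
    rw [hteq, hsz] at hne
    exact hne rfl
  have hcard := hli.fintype_card_le_finrank
  rw [← hn] at hcard
  simp only [Fintype.card_prod, Fintype.card_fin] at hcard
  omega

theorem approx [FiniteDimensional K L] (hn : n = Module.finrank K L)
    {x y : L} (hx : x ≠ 0) (hy : y ≠ 0) (h : wL.v x = wL.v y) :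
    ∃ c : K, y - c • x = 0 ∨ (y - c • x ≠ 0 ∧ wL.v y < wL.v (y - c • x)) := by
  have hu : y * x⁻¹ ≠ 0 := mul_ne_zero hy (inv_ne_zero hx)
  have hvu : wL.v (y * x⁻¹) = 0 := by
    rw [wL.v_mul _ _ hy (inv_ne_zero hx), wL.v_inv hx]; omega
  obtain ⟨c, hc⟩ := approx_unit wK wL htot hn hu hvu
  refine ⟨c, ?_⟩
  have key : y - c • x = x * (y * x⁻¹ - algebraMap K L c) := by
    rw [Algebra.smul_def]
    field_simp
  rcases hc with h0 | ⟨hne, hpos⟩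
  · left; rw [key, h0, mul_zero]
  · right
    rw [key]
    refine ⟨mul_ne_zero hx hne, ?_⟩
    rw [wL.v_mul _ _ hx hne, ← h]
    omega



theorem trace_not_integral [FiniteDimensional K L] (hn : n = Module.finrank K L)
    {d : ℤ} (hd : IsDifferentVal wK wL d) {z : L} (hz : z ≠ 0)
    (hvz : wL.v z = -d - 1) :
    ¬ wK.Integral (Algebra.trace K L z) := by
  intro hint
  have key : ∀ x : L, (x ≠ 0 → -d - 1 ≤ wL.v x) → wK.Integral (Algebra.trace K L x) := by
    intro x hx
    by_cases hx0 : x = 0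
    · exact Or.inl (by rw [hx0, map_zero])
    have hge := hx hx0
    by_cases hcase : -d ≤ wL.v x
    · exact (hd (-d)).mpr le_rfl x (fun _ => hcase)
    have hveq : wL.v x = -d - 1 := by omega
    obtain ⟨c, hc⟩ := approx wK wL htot hn hz hx0 (by rw [hvz, hveq])
    have trace_split : Algebra.trace K L x
        = c * Algebra.trace K L z + Algebra.trace K L (x - c • z) := by
      conv_lhs => rw [show x = c • z + (x - c • z) from (add_sub_cancel _ _).symm]
      rw [map_add, map_smul, smul_eq_mul]
    have hr : wK.Integral (Algebra.trace K L (x - c • z)) := by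
      apply (hd (-d)).mpr le_rfl
      intro hr0
      rcases hc with h0 | ⟨hne, hlt⟩
      · exact absurd h0 hr0
      · rw [hveq] at hlt; omega
    have hcint : wK.Integral c := by
      by_cases hc0 : c = 0
      · exact Or.inl hc0
      right
      by_contra hneg
      push_neg at hneg
      have hnpos : 0 < n := htot.1
      have hcz : wL.v (c • z) = (n : ℤ) * wK.v c + (-d - 1) := by
        rw [v_smul wK wL htot hc0 hz, hvz]
      rcases hc with h0 | ⟨hne, hlt⟩
      · have hxz : x = c • z := by
          have := sub_eq_zero.mp h0; exact this
        rw [hxz, hcz] at hveq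
        nlinarith
      · have hczx : c • z = x + -(x - c • z) := by ring
        have hvneg : wL.v (-(x - c • z)) = wL.v (x - c • z) := wL.v_neg hne
        have hltv : wL.v x < wL.v (-(x - c • z)) := by rw [hvneg]; exact hlt
        obtain ⟨_, heq⟩ := wL.v_add_eq hx0 (neg_ne_zero.mpr hne) hltv
        rw [← hczx] at heq
        rw [hcz, hveq] at heq
        nlinarith
    rw [trace_split]
    exact wK.integral_add (wK.integral_mul hcint hint) hr
  have := (hd (-d - 1)).mp key
  omega

theorem trace_ne_zero [FiniteDimensional K L] (hn : n = Module.finrank K L)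
    {d : ℤ} (hd : IsDifferentVal wK wL d) {z : L} (hz : z ≠ 0)
    (hvz : wL.v z ≡ -d - 1 [ZMOD (n : ℤ)]) :
    Algebra.trace K L z ≠ 0 := by
  obtain ⟨k, hk⟩ := Int.modEq_iff_dvd.mp hvz
  obtain ⟨a, ha0, hak⟩ := wK.v_surj k
  have hz' : a • z ≠ 0 := smul_ne_zero ha0 hz
  have hvz' : wL.v (a • z) = -d - 1 := by
    rw [v_smul wK wL htot ha0 hz, hak]
    omega
  have hni := trace_not_integral wK wL htot hn hd hz' hvz'
  intro h0
  apply hni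
  rw [map_smul, smul_eq_mul, h0, mul_zero]
  exact Or.inl rfl


theorem span_classes [FiniteDimensional K L] (hn : n = Module.finrank K L)
    (W : Submodule K L) {ι : Type} [Fintype ι] (x : ι → L)
    (hxW : ∀ i, x i ∈ W) (hx0 : ∀ i, x i ≠ 0)
    (hd : ∀ i j : ι, i ≠ j → ¬ (wL.v (x i) ≡ wL.v (x j) [ZMOD (n : ℤ)]))
    (hrep : ∀ y ∈ W, y ≠ 0 → ∃ i, wL.v y ≡ wL.v (x i) [ZMOD (n : ℤ)]) :
    W ≤ Submodule.span K (Set.range x) := by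
  classical
  set Sp := Submodule.span K (Set.range x) with hSp
  intro w hwW
  by_contra hw
  have hnpos : 0 < n := htot.1
  have hw0 : w ≠ 0 := by rintro rfl; exact hw (Submodule.zero_mem _)
  -- one approximation step
  have step : ∀ u : L, u ∈ W → u ∉ Sp →
      ∃ u' : L, u' ∈ W ∧ u' ∉ Sp ∧ (u - u') ∈ Sp ∧ wL.v u < wL.v u' := by
    intro u huW huSp
    have hu0 : u ≠ 0 := by rintro rfl; exact huSp (Submodule.zero_mem _)
    obtain ⟨i, hi⟩ := hrep u huW hu0
    obtain ⟨k, hk⟩ := Int.modEq_iff_dvd.mp hi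
    obtain ⟨cK, hcK0, hcKv⟩ := wK.v_surj (-k)
    have hcx0 : cK • x i ≠ 0 := smul_ne_zero hcK0 (hx0 i)
    have hvcx : wL.v (cK • x i) = wL.v u := by
      rw [v_smul wK wL htot hcK0 (hx0 i), hcKv,
        show ((n : ℤ) * -k) = -((n : ℤ) * k) by ring]
      omega
    obtain ⟨c, hc⟩ := approx wK wL htot hn hcx0 hu0 hvcx
    have hmem : (c * cK) • x i ∈ Sp := Submodule.smul_mem _ _
      (Submodule.subset_span (Set.mem_range_self i))
    rcases hc with h0 | ⟨hne, hlt⟩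
    · exfalso
      apply huSp
      have : u = (c * cK) • x i := by
        rw [mul_smul]
        exact sub_eq_zero.mp h0
      rw [this]
      exact hmem
    · refine ⟨u - (c * cK) • x i, ?_, ?_, ?_, ?_⟩
      · exact Submodule.sub_mem _ huW (Submodule.smul_mem _ _ (hxW i))
      · intro hmem'
        apply huSp
        have := Submodule.add_mem Sp hmem' hmem
        simpa using this
      · simpa using hmem
      · rw [mul_smul]; exact hlt
  -- iterate the step
  set F : L → L := fun u =>
    if h : u ∈ W ∧ u ∉ Sp then Classical.choose (step u h.1 h.2) else 0 with hF
  set seq : ℕ → L := fun m => F^[m] w with hseq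
  have hinv : ∀ m : ℕ, seq m ∈ W ∧ seq m ∉ Sp ∧ (w - seq m) ∈ Sp ∧
      wL.v w + m ≤ wL.v (seq m) := by
    intro m
    induction m with
    | zero =>
      have h0 : seq 0 = w := rfl
      rw [h0]
      exact ⟨hwW, hw, by simp, by simp⟩
    | succ m ih =>
      obtain ⟨h1, h2, h3, h4⟩ := ih
      have hs : seq (m + 1) = F (seq m) := Function.iterate_succ_apply' F m w
      rw [hs, hF]
      simp only [dif_pos (And.intro h1 h2)]
      obtain ⟨g1, g2, g3, g4⟩ := Classical.choose_spec (step (seq m) h1 h2)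
      refine ⟨g1, g2, ?_, ?_⟩
      · have := Submodule.add_mem Sp h3 g3
        simpa using this
      · push_cast
        omega
  -- coordinates
  have hcoord : ∀ m : ℕ, ∃ c : ι → K, ∑ i, c i • x i = w - seq m := by
    intro m
    exact (Submodule.mem_span_range_iff_exists_fun K).mp (hinv m).2.2.1
  set γ : ℕ → ι → K := fun m => Classical.choose (hcoord m) with hγdef
  have hγ : ∀ m, ∑ i, γ m i • x i = w - seq m := fun m => Classical.choose_spec (hcoord m)
  have hseqne : ∀ m, seq m ≠ 0 := by
    intro m h0
    exact (hinv m).2.1 (h0 ▸ Submodule.zero_mem Sp)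
  -- difference bound
  have key2 : ∀ m m' : ℕ, ∀ i : ι, γ m i ≠ γ m' i →
      wL.v w + (min m m' : ℤ) ≤ (n : ℤ) * wK.v (γ m i - γ m' i) + wL.v (x i) := by
    intro m m' i hne
    have hsum : ∑ j, (γ m j - γ m' j) • x j = seq m' - seq m := by
      have : ∀ j, (γ m j - γ m' j) • x j = γ m j • x j - γ m' j • x j :=
        fun j => sub_smul _ _ _
      rw [Finset.sum_congr rfl (fun j _ => this j), Finset.sum_sub_distrib, hγ, hγ]
      ring
    have hcombo := combo wK wL htot Finset.univ x (fun i _ => hx0 i)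
      (fun i _ j _ hij => hd i j hij) (fun j => γ m j - γ m' j)
      ⟨i, Finset.mem_univ i, sub_ne_zero.mpr hne⟩
    have hne2 : seq m' - seq m ≠ 0 := hsum ▸ hcombo.1
    have hvd : wL.v w + (min m m' : ℤ) ≤ wL.v (seq m' - seq m) := by
      have h1 := (hinv m).2.2.2
      have h2 := (hinv m').2.2.2
      have h3 := wL.v_add (seq m') (-(seq m)) (hseqne m') (neg_ne_zero.mpr (hseqne m))
        (by rwa [← sub_eq_add_neg])
      rw [← sub_eq_add_neg, wL.v_neg (hseqne m)] at h3
      simp only [min_le_iff] at h3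
      rcases le_total (m : ℤ) (m' : ℤ) with h | h
      · rw [min_eq_left h]; omega
      · rw [min_eq_right h]; omega
    have hb : wL.v (∑ j, (γ m j - γ m' j) • x j)
        ≤ (n : ℤ) * wK.v (γ m i - γ m' i) + wL.v (x i) :=
      hcombo.2 i (Finset.mem_univ i) (sub_ne_zero.mpr hne)
    rw [hsum] at hb
    exact le_trans hvd hb
  -- coordinates are Cauchy, take limits
  have hlim : ∀ i : ι, ∃ c : K, ∀ N : ℤ, ∃ M : ℕ, ∀ m : ℕ, M ≤ m →
      γ m i = c ∨ N ≤ wK.v (γ m i - c) := by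
    intro i
    apply wK.complete (fun m => γ m i)
    intro N
    refine ⟨((n : ℤ) * N + wL.v (x i) - wL.v w).toNat, ?_⟩
    intro m hm m' hm'
    by_cases heq : γ m i = γ m' i
    · exact Or.inl heq
    right
    have hk2 := key2 m m' i heq
    have hmin : ((n : ℤ) * N + wL.v (x i) - wL.v w) ≤ (min m m' : ℤ) := by
      have h1 := Int.self_le_toNat ((n : ℤ) * N + wL.v (x i) - wL.v w)
      have hm2 : ((((n : ℤ) * N + wL.v (x i) - wL.v w).toNat : ℕ) : ℤ) ≤ (m : ℤ) := by
        exact_mod_cast hm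
      have hm3 : ((((n : ℤ) * N + wL.v (x i) - wL.v w).toNat : ℕ) : ℤ) ≤ (m' : ℤ) := by
        exact_mod_cast hm'
      exact le_min (by omega) (by omega)
    have hnN : (n : ℤ) * N ≤ (n : ℤ) * wK.v (γ m i - γ m' i) := by omega
    exact le_of_mul_le_mul_left hnN (by exact_mod_cast hnpos)
  choose c hc using hlim
  -- the limit combination equals w
  have hδ : w - ∑ i, c i • x i = 0 := by
    by_contra hδ0
    set δ := w - ∑ i, c i • x i with hδdef
    set N := wL.v δ + 1 with hN
    -- choose per-coordinate thresholds
    have hNi : ∀ i : ι, ∃ M : ℕ, ∀ m : ℕ, M ≤ m →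
        (γ m i - c i) • x i = 0 ∨ N ≤ wL.v ((γ m i - c i) • x i) := by
      intro i
      obtain ⟨M, hM⟩ := hc i (max 0 (N - wL.v (x i)))
      refine ⟨M, ?_⟩
      intro m hm
      rcases hM m hm with h0 | hv
      · left; rw [h0, sub_self, zero_smul]
      by_cases h0 : γ m i = c i
      · left; rw [h0, sub_self, zero_smul]
      right
      rw [v_smul wK wL htot (sub_ne_zero.mpr h0) (hx0 i)]
      have h1 : max 0 (N - wL.v (x i)) ≤ (n : ℤ) * max 0 (N - wL.v (x i)) := by
        nlinarith [le_max_left (0 : ℤ) (N - wL.v (x i)), (by exact_mod_cast hnpos : (0:ℤ) < n)]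
      have h2 := le_max_right (0 : ℤ) (N - wL.v (x i))
      have h3 : (n : ℤ) * max 0 (N - wL.v (x i)) ≤ (n : ℤ) * wK.v (γ m i - c i) := by
        apply mul_le_mul_of_nonneg_left hv (by positivity)
      omega
    choose M hM using hNi
    set Mstar : ℕ := max (Finset.univ.sup M) (N - wL.v w).toNat with hMstar
    set m := Mstar with hm
    have hτ : (∑ i, (γ m i - c i) • x i) = 0 ∨
        N ≤ wL.v (∑ i, (γ m i - c i) • x i) := by
      apply wL.v_sum_ge
      intro i _
      apply hM i
      exact le_trans (Finset.le_sup (Finset.mem_univ i)) (le_max_left _ _)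
    have hδeq : δ = seq m + ∑ i, (γ m i - c i) • x i := by
      have : ∀ j, (γ m j - c j) • x j = γ m j • x j - c j • x j := fun j => sub_smul _ _ _
      rw [Finset.sum_congr rfl (fun j _ => this j), Finset.sum_sub_distrib, hγ, hδdef]
      ring
    have hvseq : N ≤ wL.v (seq m) := by
      have h1 := (hinv m).2.2.2
      have h2 : ((N - wL.v w).toNat : ℤ) ≤ (m : ℤ) := by
        exact_mod_cast le_trans (le_max_right _ _) (le_refl Mstar)
      have h3 := Int.self_le_toNat (N - wL.v w)
      omega
    rcases hτ with h0 | hvτ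
    · rw [h0, add_zero] at hδeq
      rw [hδeq] at hN
      omega
    · have hτne : (∑ i, (γ m i - c i) • x i) ≠ 0 := by
        intro h0
        rw [h0, add_zero] at hδeq
        rw [hδeq] at hN
        omega
      have := wL.v_add (seq m) _ (hseqne m) hτne (by rw [← hδeq]; exact hδ0)
      rw [← hδeq] at this
      simp only [le_min_iff, min_le_iff] at this
      omega
  apply hw
  have : w = ∑ i, c i • x i := by
    have := sub_eq_zero.mp hδ
    exact this
  rw [this]
  exact Submodule.sum_mem _ (fun i _ =>
    Submodule.smul_mem _ _ (Submodule.subset_span (Set.mem_range_self i)))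



open scoped Classical in
theorem classes_card [FiniteDimensional K L] (hn : n = Module.finrank K L) [NeZero n]
    (W : Submodule K L) :
    (Finset.univ.filter
        (fun a : ZMod n => ∃ y ∈ W, y ≠ 0 ∧ ((wL.v y : ℤ) : ZMod n) = a)).card
      = Module.finrank K ↥W := by
  classical
  set S := Finset.univ.filter
    (fun a : ZMod n => ∃ y ∈ W, y ≠ 0 ∧ ((wL.v y : ℤ) : ZMod n) = a) with hS
  have hrepex : ∀ a : {a : ZMod n // a ∈ S}, ∃ y, y ∈ W ∧ y ≠ 0 ∧
      ((wL.v y : ℤ) : ZMod n) = (a : ZMod n) := by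
    rintro ⟨a, ha⟩
    rw [hS, Finset.mem_filter] at ha
    obtain ⟨-, y, hyW, hy0, hyv⟩ := ha
    exact ⟨y, hyW, hy0, hyv⟩
  choose x hxW hx0 hxv using hrepex
  have hd : ∀ i j : {a : ZMod n // a ∈ S}, i ≠ j →
      ¬ (wL.v (x i) ≡ wL.v (x j) [ZMOD (n : ℤ)]) := by
    intro i j hij hmod
    apply hij
    have : ((wL.v (x i) : ℤ) : ZMod n) = ((wL.v (x j) : ℤ) : ZMod n) :=
      (ZMod.intCast_eq_intCast_iff _ _ _).mpr hmod
    rw [hxv i, hxv j] at this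
    exact Subtype.ext this
  apply le_antisymm
  · -- card ≤ finrank via linear independence
    have hli : LinearIndependent K x := li_of_distinct wK wL htot x hx0 hd
    set x' : {a : ZMod n // a ∈ S} → ↥W := fun i => ⟨x i, hxW i⟩ with hx'
    have hli' : LinearIndependent K x' := by
      apply LinearIndependent.of_comp W.subtype
      have : W.subtype ∘ x' = x := by funext i; rfl
      rwa [this]
    have := hli'.fintype_card_le_finrank
    rwa [Fintype.card_coe] at this
  · -- finrank ≤ card via spanning
    have hsp := span_classes wK wL htot hn W x hxW hx0 hd ?_
    · calc Module.finrank K ↥W ≤ Module.finrank K ↥(Submodule.span K (Set.range x)) :=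
          Submodule.finrank_mono hsp
        _ ≤ Fintype.card {a : ZMod n // a ∈ S} := finrank_range_le_card x
        _ = S.card := Fintype.card_coe _
    · intro y hyW hy0
      have haS : ((wL.v y : ℤ) : ZMod n) ∈ S := by
        rw [hS, Finset.mem_filter]
        exact ⟨Finset.mem_univ _, y, hyW, hy0, rfl⟩
      refine ⟨⟨_, haS⟩, ?_⟩
      rw [← ZMod.intCast_eq_intCast_iff]
      rw [hxv ⟨_, haS⟩]


end LocalFieldStruct

/-- `x` is a normal basis generator of `L` over `K`: the Galois conjugates of
`x` form a `K`-basis of `L`. -/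
def IsNormalElement (K : Type) [Field K] {L : Type} [Field L] [Algebra K L]
    (x : L) : Prop :=
  LinearIndependent K (fun σ : L ≃ₐ[K] L => σ x) ∧
    Submodule.span K (Set.range fun σ : L ≃ₐ[K] L => σ x) = ⊤

/-- The valuation criterion `VC(L/K)`, for an extension with ramification
index `e` and different of valuation `d`: every nonzero `x ∈ L` with
`v_L(x) ≡ -d-1 (mod e)` is a normal basis generator of `L` over `K`. -/
def VC (K : Type) [Field K] {L : Type} [Field L] [Algebra K L]
    (wL : LocalFieldStruct L) (e : ℕ) (d : ℤ) : Prop :=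
  ∀ x : L, x ≠ 0 → Int.ModEq (e : ℤ) (wL.v x) (-d - 1) → IsNormalElement K x

open LocalFieldStruct in
/-- **Lemma (duality).** Let `L/K` be a finite separable totally ramified
extension of local fields of degree `n`, and let `d̄ = (-d_{L/K} - 1 mod n)`.
For every sub-`K`-vector space `V` of `L`, the set `s(V^⊥)` is the complement
in `ℤ/nℤ` of the set `d̄ - s(V)`, where `V^⊥` is the orthogonal space of `V`
with respect to the trace form. -/
theorem statement4 {K L : Type} [Field K] [Field L] [Algebra K L]
    [FiniteDimensional K L] [Algebra.IsSeparable K L]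
    (wK : LocalFieldStruct K) (wL : LocalFieldStruct L)
    (n : ℕ) (hn : n = Module.finrank K L)
    (htot : IsRamificationIndex wK wL n)
    (d : ℤ) (hd : IsDifferentVal wK wL d)
    (V : Submodule K L) :
    {a : ZMod n | ∃ y : L, (∀ x ∈ V, Algebra.trace K L (x * y) = 0) ∧
        y ≠ 0 ∧ ((wL.v y : ℤ) : ZMod n) = a} =
      ((fun a : ZMod n => ((-d - 1 : ℤ) : ZMod n) - a) ''
        {a : ZMod n | ∃ x ∈ V, x ≠ 0 ∧ ((wL.v x : ℤ) : ZMod n) = a})ᶜ := by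
  classical
  have hnpos : 0 < n := htot.1
  haveI : NeZero n := ⟨by omega⟩
  set U : Submodule K L := (Algebra.traceForm K L).orthogonal V with hU
  set A : Finset (ZMod n) := Finset.univ.filter
    (fun a => ∃ y ∈ U, y ≠ 0 ∧ ((wL.v y : ℤ) : ZMod n) = a) with hA
  set Bq : Finset (ZMod n) := Finset.univ.filter
    (fun a => ∃ x ∈ V, x ≠ 0 ∧ ((wL.v x : ℤ) : ZMod n) = a) with hBq
  set B : Finset (ZMod n) := Bq.image (fun a => ((-d - 1 : ℤ) : ZMod n) - a) with hB
  have hmemU : ∀ y : L, y ∈ U ↔ ∀ x ∈ V, Algebra.trace K L (x * y) = 0 := by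
    intro y
    rw [hU, LinearMap.BilinForm.mem_orthogonal_iff]
    constructor
    · intro h x hx
      have := h x hx
      rwa [Algebra.traceForm_apply] at this
    · intro h x hx
      rw [Algebra.traceForm_apply]
      exact h x hx
  have hcardA : A.card = Module.finrank K ↥U := classes_card wK wL htot hn U
  have hfU : Module.finrank K ↥U = n - Module.finrank K V := by
    rw [hU, LinearMap.BilinForm.finrank_orthogonal (traceForm_nondegenerate K L)
      V, ← hn]
  have hcardBq : Bq.card = Module.finrank K V := classes_card wK wL htot hn V
  have hcardB : B.card = Bq.card :=
    Finset.card_image_of_injective _ sub_right_injective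
  have hdisj : ∀ a ∈ A, a ∉ B := by
    intro a haA haB
    rw [hA, Finset.mem_filter] at haA
    obtain ⟨-, y, hyU, hy0, hyv⟩ := haA
    rw [hB, Finset.mem_image] at haB
    obtain ⟨b, hbBq, hba⟩ := haB
    rw [hBq, Finset.mem_filter] at hbBq
    obtain ⟨-, z, hzV, hz0, hzv⟩ := hbBq
    have htr0 : Algebra.trace K L (z * y) = 0 := (hmemU y).mp hyU z hzV
    have hmod : wL.v (z * y) ≡ -d - 1 [ZMOD (n : ℤ)] := by
      rw [← ZMod.intCast_eq_intCast_iff, wL.v_mul _ _ hz0 hy0]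
      push_cast only [Int.cast_add]
      rw [hzv, hyv, ← hba]
      ring
    exact trace_ne_zero wK wL htot hn hd (mul_ne_zero hz0 hy0) hmod htr0
  have hsub : A ⊆ Bᶜ := fun a ha => Finset.mem_compl.mpr (hdisj a ha)
  have hcard : Bᶜ.card ≤ A.card := by
    rw [Finset.card_compl, ZMod.card, hcardB, hcardBq, hcardA, hfU]
  have hAB : A = Bᶜ := Finset.eq_of_subset_of_card_le hsub hcard
  have h1 : {a : ZMod n | ∃ y : L, (∀ x ∈ V, Algebra.trace K L (x * y) = 0) ∧
      y ≠ 0 ∧ ((wL.v y : ℤ) : ZMod n) = a} = (A : Set (ZMod n)) := by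
    ext a
    rw [hA]
    simp only [Set.mem_setOf_eq, Finset.coe_filter, Finset.mem_univ, true_and]
    constructor
    · rintro ⟨y, hP, hy0, hyv⟩
      exact ⟨y, (hmemU y).mpr hP, hy0, hyv⟩
    · rintro ⟨y, hyU, hy0, hyv⟩
      exact ⟨y, (hmemU y).mp hyU, hy0, hyv⟩
  have h2 : {a : ZMod n | ∃ x ∈ V, x ≠ 0 ∧ ((wL.v x : ℤ) : ZMod n) = a}
      = (Bq : Set (ZMod n)) := by
    ext a
    rw [hBq]
    simp
  rw [h1, h2, hAB, Finset.coe_compl, hB, Finset.coe_image]
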